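/- Let F_q be a finite field with gcd(q, 6) = 1. Then P_l(F_q[S₃]) = ((2q-1)/q²)² · ((q⁴ + 3q³ - 2q² - 2q + 1)/q⁷), where P_l(R) = |{(a,b) ∈ R² : ab = 0}|/|R|². -/

import Mathlib

noncomputable def zeroProb (R : Type*) [Ring R] : ℚ :=
  (Nat.card {p : R × R // p.1 * p.2 = 0} : ℚ) / (Nat.card R : ℚ) ^ 2

open Finset

section Generic


lemma zeroProb_congr {R S : Type*} [Ring R] [Ring S] (e : R ≃+* S) :
    zeroProb R = zeroProb S := by
  unfold zeroProb
  have e2 : {p : R × R // p.1 * p.2 = 0} ≃ {p : S × S // p.1 * p.2 = 0} :=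
    Equiv.subtypeEquiv (e.toEquiv.prodCongr e.toEquiv) (fun p => by
      constructor
      · intro hp
        show e p.1 * e p.2 = 0
        rw [← map_mul, hp, map_zero]
      · intro hp
        exact e.injective (by rw [map_mul, map_zero]; exact hp))
  rw [Nat.card_congr e.toEquiv, Nat.card_congr e2]

lemma zeroProb_prod (A B : Type*) [Ring A] [Ring B] :
    zeroProb (A × B) = zeroProb A * zeroProb B := by
  unfold zeroProb
  have e : {p : (A × B) × (A × B) // p.1 * p.2 = 0} ≃
      {p : A × A // p.1 * p.2 = 0} × {p : B × B // p.1 * p.2 = 0} :=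
    { toFun := fun p => (⟨(p.1.1.1, p.1.2.1), by
        have := congrArg Prod.fst p.2; exact this⟩,
        ⟨(p.1.1.2, p.1.2.2), by have := congrArg Prod.snd p.2; exact this⟩)
      invFun := fun p => ⟨((p.1.1.1, p.2.1.1), (p.1.1.2, p.2.1.2)),
        Prod.ext p.1.2 p.2.2⟩
      left_inv := fun p => rfl
      right_inv := fun p => rfl }
  rw [Nat.card_congr e, Nat.card_prod, Nat.card_prod]
  push_cast
  rw [mul_pow]
  exact div_mul_div_comm _ _ _ _ |>.symm



lemma card_mulpairs (R : Type*) [Ring R] [Fintype R] :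
    Nat.card {p : R × R // p.1 * p.2 = 0} = ∑ a : R, Nat.card {b : R // a * b = 0} := by
  classical
  rw [Nat.card_congr (Equiv.subtypeProdEquivSigmaSubtype (fun a b : R => a * b = 0)),
    Nat.card_eq_fintype_card, Fintype.card_sigma]
  simp [Nat.card_eq_fintype_card]

lemma card_ann_field {F : Type*} [Field F] [Fintype F] (a : F) [Decidable (a = 0)] :
    Nat.card {b : F // a * b = 0} = if a = 0 then Fintype.card F else 1 := by
  classical
  split_ifs with ha
  · subst ha
    simp only [Nat.card_eq_fintype_card, zero_mul]
    exact Fintype.card_congr (Equiv.subtypeUnivEquiv fun _ => trivial)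
  · rw [Nat.card_eq_fintype_card]
    rw [Fintype.card_eq_one_iff]
    exact ⟨⟨0, by simp⟩, fun b => Subtype.ext (by
      have := b.2
      rcases mul_eq_zero.1 this with h | h
      · exact absurd h ha
      · simp [h])⟩

lemma sum_ite_zero' {F : Type*} [Fintype F] [DecidableEq F] [Zero F] (n m : ℕ) :
    ∑ a : F, (if a = 0 then n else m) = n + (Fintype.card F - 1) * m := by
  classical
  rw [Finset.sum_ite, Finset.sum_const, Finset.sum_const, Finset.filter_eq' univ 0,
    if_pos (mem_univ _)]
  rw [Finset.filter_ne' univ 0, Finset.card_erase_of_mem (mem_univ _)]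
  simp [Finset.card_univ, smul_eq_mul]

lemma card_pairs_field (F : Type*) [Field F] [Fintype F] :
    Nat.card {p : F × F // p.1 * p.2 = 0} = 2 * Fintype.card F - 1 := by
  classical
  rw [card_mulpairs]
  simp only [card_ann_field]
  rw [sum_ite_zero']
  have : 1 ≤ Fintype.card F := Fintype.card_pos
  omega

end Generic

section MatrixCount


variable {F : Type*} [Field F] [Fintype F]

local notation "M2" F => Matrix (Fin 2) (Fin 2) F

-- cardinality of the kernel of a 2x2 matrix
lemma card_ker_matrix (A : Matrix (Fin 2) (Fin 2) F) [Decidable (A = 0)] [Decidable (A.det = 0)] :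
    Nat.card {v : Fin 2 → F // A.mulVec v = 0} =
      if A = 0 then Fintype.card F ^ 2 else if A.det = 0 then Fintype.card F else 1 := by
  classical
  have hker : ∀ v : Fin 2 → F, (A.mulVec v = 0) ↔ v ∈ LinearMap.ker A.mulVecLin := by
    intro v; simp [LinearMap.mem_ker]
  split_ifs with h0 hdet
  · subst h0
    rw [Nat.card_congr (Equiv.subtypeUnivEquiv (fun v => by simp))]
    simp [Nat.card_eq_fintype_card, Fintype.card_fun]
  · -- kernel is 1-dimensional
    rw [Nat.card_congr (Equiv.subtypeEquivRight hker), Nat.card_eq_fintype_card]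
    have hbot : LinearMap.ker A.mulVecLin ≠ ⊥ := by
      obtain ⟨v, hv, hv0⟩ := (Matrix.exists_mulVec_eq_zero_iff.2 hdet)
      intro hb
      have : v ∈ LinearMap.ker A.mulVecLin := (hker v).1 hv0
      rw [hb, Submodule.mem_bot] at this
      exact hv this
    have htop : LinearMap.ker A.mulVecLin ≠ ⊤ := by
      intro ht
      apply h0
      ext i j
      have : A.mulVec (Pi.single j 1) = 0 := by
        have : Pi.single j 1 ∈ LinearMap.ker A.mulVecLin := ht ▸ Submodule.mem_top
        simpa [LinearMap.mem_ker] using this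
      have := congrFun this i
      simpa [Matrix.mulVec_single_one] using this
    have hrank : Module.finrank F (LinearMap.ker A.mulVecLin) = 1 := by
      have h1 : 0 < Module.finrank F (LinearMap.ker A.mulVecLin) := by
        rw [Module.finrank_pos_iff]
        exact Submodule.nontrivial_iff_ne_bot.2 hbot
      have h2 : Module.finrank F (LinearMap.ker A.mulVecLin) < 2 := by
        have := Submodule.finrank_lt (K := F) (V := Fin 2 → F) htop
        simpa using this
      omega
    rw [Module.card_eq_pow_finrank (K := F), hrank, pow_one]
  · -- invertible
    rw [Nat.card_eq_fintype_card, Fintype.card_eq_one_iff]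
    have : IsUnit A := by
      rw [Matrix.isUnit_iff_isUnit_det, isUnit_iff_ne_zero]
      exact hdet
    obtain ⟨B, hB⟩ := this.exists_left_inv
    refine ⟨⟨0, by simp⟩, fun v => Subtype.ext ?_⟩
    have hv := v.2
    have : B.mulVec (A.mulVec v.1) = 0 := by rw [hv, Matrix.mulVec_zero]
    rwa [Matrix.mulVec_mulVec, hB, Matrix.one_mulVec] at this

lemma card_ann_matrix (A : Matrix (Fin 2) (Fin 2) F) :
    Nat.card {B : Matrix (Fin 2) (Fin 2) F // A * B = 0} =
      Nat.card {v : Fin 2 → F // A.mulVec v = 0} ^ 2 := by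
  classical
  have e : {B : Matrix (Fin 2) (Fin 2) F // A * B = 0} ≃
      (Fin 2 → {v : Fin 2 → F // A.mulVec v = 0}) :=
    { toFun := fun B j => ⟨fun i => B.1 i j, by
        funext i
        have := congrFun (congrFun B.2 i) j
        simpa [Matrix.mul_apply, Matrix.mulVec, dotProduct] using this⟩
      invFun := fun f => ⟨Matrix.of (fun i j => (f j).1 i), by
        ext i j
        have := congrFun (f j).2 i
        simpa [Matrix.mul_apply, Matrix.mulVec, dotProduct] using this⟩
      left_inv := fun B => rfl
      right_inv := fun f => rfl }
  rw [Nat.card_congr e, Nat.card_eq_fintype_card, Fintype.card_fun]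
  simp [Nat.card_eq_fintype_card]

-- number of solutions of a nondegenerate linear equation in two variables
lemma card_lin_eq (a b : F) (hab : ¬(a = 0 ∧ b = 0)) :
    Nat.card {p : F × F // a * p.2 = b * p.1} = Fintype.card F := by
  classical
  by_cases ha : a = 0
  · subst ha
    have hb : b ≠ 0 := fun hb => hab ⟨rfl, hb⟩
    refine Nat.card_congr ?_ |>.trans (Nat.card_eq_fintype_card (α := F))
    exact
      { toFun := fun p => p.1.2
        invFun := fun d => ⟨(0, d), by simp⟩
        left_inv := fun p => Subtype.ext (by
          obtain ⟨⟨c, d⟩, hp⟩ := p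
          simp only [zero_mul] at hp
          have : c = 0 := by
            rcases mul_eq_zero.1 hp.symm with h | h
            · exact absurd h hb
            · exact h
          simp [this])
        right_inv := fun d => rfl }
  · refine Nat.card_congr ?_ |>.trans (Nat.card_eq_fintype_card (α := F))
    exact
      { toFun := fun p => p.1.1
        invFun := fun c => ⟨(c, b * c * a⁻¹), by field_simp⟩
        left_inv := fun p => Subtype.ext (by
          obtain ⟨⟨c, d⟩, hp⟩ := p
          simp only at hp ⊢
          have : d = b * c * a⁻¹ := by field_simp; linear_combination hp
          simp [this])
        right_inv := fun c => rfl }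

lemma card_det_zero :
    Nat.card {A : Matrix (Fin 2) (Fin 2) F // A.det = 0} + Fintype.card F =
      Fintype.card F ^ 3 + Fintype.card F ^ 2 := by
  classical
  have e : {A : Matrix (Fin 2) (Fin 2) F // A.det = 0} ≃
      Σ p : F × F, {q : F × F // p.1 * q.2 = p.2 * q.1} :=
    { toFun := fun A => ⟨(A.1 0 0, A.1 0 1), ⟨(A.1 1 0, A.1 1 1), by
        have := A.2
        rw [Matrix.det_fin_two] at this
        simp only
        linear_combination this⟩⟩
      invFun := fun x => ⟨Matrix.of ![![x.1.1, x.1.2], ![x.2.1.1, x.2.1.2]], by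
        rw [Matrix.det_fin_two]
        simp only [Matrix.of_apply, Matrix.cons_val', Matrix.cons_val_zero, Matrix.cons_val_one,
          Matrix.head_cons, Matrix.head_fin_const]
        linear_combination x.2.2⟩
      left_inv := fun A => Subtype.ext (by
        ext i j
        fin_cases i <;> fin_cases j <;> rfl)
      right_inv := fun x => by
        rcases x with ⟨⟨a, b⟩, ⟨⟨c, d⟩, h⟩⟩
        rfl }
  rw [Nat.card_congr e, Nat.card_eq_fintype_card, Fintype.card_sigma]
  have key : ∀ p : F × F, Fintype.card {q : F × F // p.1 * q.2 = p.2 * q.1} =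
      if p = 0 then Fintype.card F ^ 2 else Fintype.card F := by
    intro p
    split_ifs with hp
    · subst hp
      rw [← Nat.card_eq_fintype_card]
      rw [Nat.card_congr (Equiv.subtypeUnivEquiv (fun v => by simp))]
      simp [Nat.card_eq_fintype_card, sq]
    · rw [← Nat.card_eq_fintype_card, card_lin_eq]
      intro ⟨h1, h2⟩
      exact hp (Prod.ext h1 h2)
  simp only [key]
  rw [sum_ite_zero', Fintype.card_prod, Nat.sub_mul, one_mul]
  have h1 : 1 ≤ Fintype.card F := Fintype.card_pos
  have a1 : Fintype.card F * Fintype.card F = Fintype.card F ^ 2 := by ring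
  have a2 : Fintype.card F * Fintype.card F * Fintype.card F = Fintype.card F ^ 3 := by ring
  have h2 : Fintype.card F ≤ Fintype.card F ^ 3 := Nat.le_self_pow (by norm_num) _
  rw [a2]
  omega

lemma card_mulpairs' (R : Type*) [Ring R] [Fintype R] :
    Nat.card {p : R × R // p.1 * p.2 = 0} = ∑ a : R, Nat.card {b : R // a * b = 0} := by
  classical
  rw [Nat.card_congr (Equiv.subtypeProdEquivSigmaSubtype (fun a b : R => a * b = 0)),
    Nat.card_eq_fintype_card, Fintype.card_sigma]
  simp [Nat.card_eq_fintype_card]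

lemma card_matrix_fin2 : Fintype.card (Matrix (Fin 2) (Fin 2) F) = Fintype.card F ^ 4 := by
  rw [Fintype.card_congr ((Matrix.of (m := Fin 2) (n := Fin 2) (α := F)).symm)]
  rw [Fintype.card_fun, Fintype.card_fun, Fintype.card_fin, ← pow_mul]

lemma card_pairs_matrix :
    Nat.card {p : Matrix (Fin 2) (Fin 2) F × Matrix (Fin 2) (Fin 2) F // p.1 * p.2 = 0}
      + 2 * Fintype.card F ^ 3 + 2 * Fintype.card F ^ 2 =
      Fintype.card F ^ 5 + 3 * Fintype.card F ^ 4 + Fintype.card F := by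
  classical
  rw [card_mulpairs']
  have key : ∀ A : Matrix (Fin 2) (Fin 2) F,
      Nat.card {B : Matrix (Fin 2) (Fin 2) F // A * B = 0} =
        (if A.det = 0 then Fintype.card F ^ 2 else 1)
          + (if A = 0 then Fintype.card F ^ 4 - Fintype.card F ^ 2 else 0) := by
    intro A
    rw [card_ann_matrix, card_ker_matrix]
    have h1 : 1 ≤ Fintype.card F := Fintype.card_pos
    have h2 : Fintype.card F ^ 2 ≤ Fintype.card F ^ 4 := Nat.pow_le_pow_right h1 (by norm_num)
    by_cases h0 : A = 0
    · subst h0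
      have hdet : (0 : Matrix (Fin 2) (Fin 2) F).det = 0 := Matrix.det_zero
      rw [if_pos rfl, if_pos rfl, if_pos hdet]
      have : (Fintype.card F ^ 2) ^ 2 = Fintype.card F ^ 4 := by ring
      omega
    · rw [if_neg h0, if_neg h0, add_zero]
      by_cases hdet : A.det = 0
      · rw [if_pos hdet, if_pos hdet, sq]
      · rw [if_neg hdet, if_neg hdet, one_pow]
  simp only [key]
  rw [Finset.sum_add_distrib, Finset.sum_ite_eq' Finset.univ (0 : Matrix (Fin 2) (Fin 2) F)
    (fun _ => Fintype.card F ^ 4 - Fintype.card F ^ 2), if_pos (Finset.mem_univ _)]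
  rw [Finset.sum_ite, Finset.sum_const, Finset.sum_const, smul_eq_mul, smul_eq_mul, mul_one]
  have h1 : 1 ≤ Fintype.card F := Fintype.card_pos
  have hsum : (Finset.univ.filter (fun A : Matrix (Fin 2) (Fin 2) F => A.det = 0)).card +
      (Finset.univ.filter (fun A : Matrix (Fin 2) (Fin 2) F => ¬A.det = 0)).card =
      Fintype.card F ^ 4 := by
    rw [Finset.card_filter_add_card_filter_not, Finset.card_univ, card_matrix_fin2]
  have hD : (Finset.univ.filter (fun A : Matrix (Fin 2) (Fin 2) F => A.det = 0)).card +
      Fintype.card F = Fintype.card F ^ 3 + Fintype.card F ^ 2 := by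
    rw [← Fintype.card_subtype, ← Nat.card_eq_fintype_card]
    exact card_det_zero
  have hmul : (Finset.univ.filter (fun A : Matrix (Fin 2) (Fin 2) F => A.det = 0)).card *
      Fintype.card F ^ 2 + Fintype.card F ^ 3 =
      Fintype.card F ^ 5 + Fintype.card F ^ 4 := by
    have hc := congrArg (· * Fintype.card F ^ 2) hD
    simp only [Nat.add_mul] at hc
    have a1 : Fintype.card F * Fintype.card F ^ 2 = Fintype.card F ^ 3 := by ring
    have a2 : Fintype.card F ^ 3 * Fintype.card F ^ 2 = Fintype.card F ^ 5 := by ring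
    have a3 : Fintype.card F ^ 2 * Fintype.card F ^ 2 = Fintype.card F ^ 4 := by ring
    omega
  have h9 : Fintype.card F ^ 2 ≤ Fintype.card F ^ 4 := Nat.pow_le_pow_right h1 (by norm_num)
  omega

end MatrixCount

section Rep

def N3 : Equiv.Perm (Fin 3) → Matrix (Fin 2) (Fin 2) ℤ :=
  fun g => Matrix.of fun i j =>
    (if g j.castSucc ≤ i.castSucc then 1 else 0) - (if g j.succ ≤ i.castSucc then 1 else 0)

lemma N3_one : N3 1 = 1 := by decide
lemma N3_mul : ∀ g h, N3 (g * h) = N3 g * N3 h := by decide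

variable (F : Type*) [Field F]

def rho : Equiv.Perm (Fin 3) →* (F × F × Matrix (Fin 2) (Fin 2) F) where
  toFun g := (1, ((Equiv.Perm.sign g : ℤ) : F), (N3 g).map (Int.castRingHom F))
  map_one' := by
    refine Prod.ext rfl (Prod.ext (by simp) ?_)
    show (N3 1).map _ = 1
    rw [N3_one]
    exact Matrix.map_one _ (map_zero _) (map_one _)
  map_mul' := fun g h => by
    refine Prod.ext (by simp) (Prod.ext (by push_cast [map_mul]; norm_num) ?_)
    show (N3 (g * h)).map _ = _
    rw [N3_mul, Matrix.map_mul]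
    rfl

noncomputable def Phi : MonoidAlgebra F (Equiv.Perm (Fin 3)) →ₐ[F]
    (F × F × Matrix (Fin 2) (Fin 2) F) :=
  MonoidAlgebra.lift F _ (Equiv.Perm (Fin 3)) (rho F)

lemma N3_g2 : N3 (Equiv.swap 1 2) = !![1,0;1,-1] := by decide
lemma N3_g3 : N3 (Equiv.swap 0 1) = !![-1,1;0,1] := by decide
lemma N3_g4 : N3 (Equiv.swap 0 1 * Equiv.swap 1 2) = !![0,-1;1,-1] := by decide
lemma N3_g5 : N3 (Equiv.swap 1 2 * Equiv.swap 0 1) = !![-1,1;-1,0] := by decide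
lemma N3_g6 : N3 (Equiv.swap 0 2) = !![0,-1;-1,0] := by decide

lemma sgn_g2 : Equiv.Perm.sign (Equiv.swap (1 : Fin 3) 2) = -1 := by decide
lemma sgn_g3 : Equiv.Perm.sign (Equiv.swap (0 : Fin 3) 1) = -1 := by decide
lemma sgn_g4 : Equiv.Perm.sign (Equiv.swap (0 : Fin 3) 1 * Equiv.swap 1 2) = 1 := by decide
lemma sgn_g5 : Equiv.Perm.sign (Equiv.swap (1 : Fin 3) 2 * Equiv.swap 0 1) = 1 := by decide
lemma sgn_g6 : Equiv.Perm.sign (Equiv.swap (0 : Fin 3) 2) = -1 := by decide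

lemma N3_g1 : N3 1 = !![1,0;0,1] := by decide

lemma Phi_surjective (h2 : (2 : F) ≠ 0) (h3 : (3 : F) ≠ 0) :
    Function.Surjective (Phi F) := by
  rintro ⟨s, t, m⟩
  have h6 : (6 : F) ≠ 0 := by
    have h : (6 : F) = 2 * 3 := by norm_num
    rw [h]; exact mul_ne_zero h2 h3
  refine ⟨MonoidAlgebra.single 1 ((s + t + 2*(m 0 0) + 2*(m 1 1))/6)
    + MonoidAlgebra.single (Equiv.swap 1 2) ((s - t + 2*(m 0 0) + 2*(m 0 1) - 2*(m 1 1))/6)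
    + MonoidAlgebra.single (Equiv.swap 0 1) ((s - t - 2*(m 0 0) + 2*(m 1 0) + 2*(m 1 1))/6)
    + MonoidAlgebra.single (Equiv.swap 0 1 * Equiv.swap 1 2)
        ((s + t - 2*(m 0 0) - 2*(m 0 1) + 2*(m 1 0))/6)
    + MonoidAlgebra.single (Equiv.swap 1 2 * Equiv.swap 0 1)
        ((s + t + 2*(m 0 1) - 2*(m 1 0) - 2*(m 1 1))/6)
    + MonoidAlgebra.single (Equiv.swap 0 2) ((s - t - 2*(m 0 1) - 2*(m 1 0))/6), ?_⟩
  simp only [Phi, map_add, MonoidAlgebra.lift_single]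
  simp only [rho, MonoidHom.coe_mk, OneHom.coe_mk, map_one, Units.val_one, Int.cast_one,
    N3_g1, sgn_g2, sgn_g3, sgn_g4, sgn_g5, sgn_g6, N3_g2, N3_g3, N3_g4, N3_g5, N3_g6,
    Units.val_neg, Int.cast_neg]
  refine Prod.ext ?_ (Prod.ext ?_ ?_)
  · show (_ : F) = s
    simp only [Prod.fst_add, Prod.smul_fst, smul_eq_mul, Prod.fst_one, mul_one]
    field_simp
    ring
  · show (_ : F) = t
    simp only [Prod.snd_add, Prod.fst_add, Prod.smul_snd, Prod.smul_fst, smul_eq_mul, Prod.fst_one, Prod.snd_one, mul_one,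
      mul_neg_one]
    field_simp
    ring
  · show (_ : Matrix (Fin 2) (Fin 2) F) = m
    simp only [Prod.snd_add, Prod.smul_snd, Prod.snd_one, Matrix.one_fin_two]
    ext i j
    fin_cases i <;> fin_cases j <;>
      · simp only [Matrix.add_apply, Matrix.smul_apply, Matrix.map_apply, smul_eq_mul,
          Matrix.cons_val', Matrix.cons_val_zero, Matrix.cons_val_one, Matrix.head_cons,
          Matrix.head_fin_const, Matrix.empty_val', Matrix.cons_val_fin_one, Matrix.of_apply,
          Int.cast_one, Int.cast_neg, Int.cast_zero, Fin.isValue, eq_intCast]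
        push_cast
        field_simp
        ring

lemma Phi_bijective [Fintype F] (h2 : (2 : F) ≠ 0) (h3 : (3 : F) ≠ 0) :
    Function.Bijective (Phi F) := by
  have hfin : Finite (MonoidAlgebra F (Equiv.Perm (Fin 3))) :=
    Finite.of_equiv _ ((Finsupp.equivFunOnFinite (α := Equiv.Perm (Fin 3)) (M := F)).symm.trans
      MonoidAlgebra.coeffEquiv.symm)
  rw [Nat.bijective_iff_surjective_and_card]
  refine ⟨Phi_surjective F h2 h3, ?_⟩
  have hc1 : Nat.card (MonoidAlgebra F (Equiv.Perm (Fin 3))) = Fintype.card F ^ 6 := by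
    rw [Nat.card_congr (MonoidAlgebra.coeffEquiv (R := F) (M := Equiv.Perm (Fin 3)))]
    rw [Nat.card_congr (Finsupp.equivFunOnFinite (α := Equiv.Perm (Fin 3)) (M := F)),
      Nat.card_eq_fintype_card, Fintype.card_fun, Fintype.card_perm, Fintype.card_fin]
    norm_num [Nat.factorial]
  have hc2 : Nat.card (F × F × Matrix (Fin 2) (Fin 2) F) = Fintype.card F ^ 6 := by
    rw [Nat.card_prod, Nat.card_prod, Nat.card_eq_fintype_card, Nat.card_eq_fintype_card]
    have hm : Fintype.card (Matrix (Fin 2) (Fin 2) F) = Fintype.card F ^ 4 := by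
      rw [Fintype.card_congr ((Matrix.of (m := Fin 2) (n := Fin 2) (α := F)).symm)]
      rw [Fintype.card_fun, Fintype.card_fun, Fintype.card_fin, ← pow_mul]
    rw [hm]
    ring
  rw [hc1, hc2]

end Rep

section Char

variable (F : Type*) [Field F] [Fintype F]

lemma cast_prime_ne_zero (p : ℕ) (hp : p.Prime) (hdvd : p ∣ 6)
    (h : Nat.gcd (Fintype.card F) 6 = 1) : (p : F) ≠ 0 := by
  intro h0
  have hchar : ringChar F ∣ p := (CharP.cast_eq_zero_iff F (ringChar F) p).mp h0
  have hrp : (ringChar F).Prime := CharP.char_is_prime F (ringChar F)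
  have hep : ringChar F = p := (Nat.prime_dvd_prime_iff_eq hrp hp).mp hchar
  obtain ⟨n, -, hcard⟩ := FiniteField.card F (ringChar F)
  have hdvdcard : p ∣ Fintype.card F := by
    rw [hcard, ← hep]
    exact dvd_pow_self _ (by positivity)
  have : p ∣ Nat.gcd (Fintype.card F) 6 := Nat.dvd_gcd hdvdcard hdvd
  rw [h, Nat.dvd_one] at this
  exact hp.one_lt.ne' this

end Char

theorem left_prob_FS3 (F : Type*) [Field F] [Fintype F]
    (h : Nat.gcd (Fintype.card F) 6 = 1) :
    zeroProb (MonoidAlgebra F (Equiv.Perm (Fin 3))) =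
      ((2 * (Fintype.card F : ℚ) - 1) / (Fintype.card F : ℚ) ^ 2) ^ 2 *
        (((Fintype.card F : ℚ) ^ 4 + 3 * (Fintype.card F : ℚ) ^ 3 -
          2 * (Fintype.card F : ℚ) ^ 2 - 2 * (Fintype.card F : ℚ) + 1) /
          (Fintype.card F : ℚ) ^ 7) := by
  have h1 : 1 ≤ Fintype.card F := Fintype.card_pos
  have h2 : (2 : F) ≠ 0 := by
    have := cast_prime_ne_zero F 2 Nat.prime_two (by norm_num) h
    simpa using this
  have h3 : (3 : F) ≠ 0 := by
    have := cast_prime_ne_zero F 3 Nat.prime_three (by norm_num) h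
    simpa using this
  have e := RingEquiv.ofBijective (Phi F).toRingHom (Phi_bijective F h2 h3)
  rw [zeroProb_congr e, zeroProb_prod, zeroProb_prod]
  unfold zeroProb
  have hNF : Nat.card F = Fintype.card F := Nat.card_eq_fintype_card
  have hM : Nat.card (Matrix (Fin 2) (Fin 2) F) = Fintype.card F ^ 4 := by
    rw [Nat.card_eq_fintype_card, card_matrix_fin2]
  have hpf : (Nat.card {p : F × F // p.1 * p.2 = 0} : ℚ) =
      2 * (Fintype.card F : ℚ) - 1 := by
    rw [card_pairs_field]
    have : 1 ≤ 2 * Fintype.card F := by omega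
    push_cast [Nat.cast_sub this]
    ring
  have hpm : (Nat.card {p : Matrix (Fin 2) (Fin 2) F × Matrix (Fin 2) (Fin 2) F //
      p.1 * p.2 = 0} : ℚ) = (Fintype.card F : ℚ) ^ 5 + 3 * (Fintype.card F : ℚ) ^ 4
        + (Fintype.card F : ℚ) - 2 * (Fintype.card F : ℚ) ^ 3
        - 2 * (Fintype.card F : ℚ) ^ 2 := by
    have := congrArg (Nat.cast : ℕ → ℚ) (card_pairs_matrix (F := F))
    push_cast at this
    linarith
  rw [hpf, hpm, hNF, hM]
  have hq : (Fintype.card F : ℚ) ≠ 0 := by positivity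
  push_cast
  field_simp
  ring
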